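/- Let (a_k) be a sequence of affine maps a_k : ℝ^n → ℝ^n with a_k(x) = A_k x + b_k, where each A_k is skew-symmetric and b_k ∈ ℝ^n. Then there exists a subsequence such that either the subsequence converges uniformly on compact sets to an affine map with skew-symmetric linear part, or there exists an affine subspace Π ⊆ ℝ^n of dimension at most n−2 such that |a_k(x)| → +∞ for every x ∈ ℝ^n \ Π along the subsequence. -/

import Mathlib

open scoped Matrix
open Filter

lemma norm_mulVec_le (n : ℕ) (M : Fin n → Fin n → ℝ) (x : Fin n → ℝ) :
    ‖(Matrix.of M).mulVec x‖ ≤ n * ‖M‖ * ‖x‖ := by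
  have hnn : (0:ℝ) ≤ n * ‖M‖ * ‖x‖ := by positivity
  rw [pi_norm_le_iff_of_nonneg hnn]
  intro i
  have : (Matrix.of M).mulVec x i = ∑ j, M i j * x j := rfl
  rw [Real.norm_eq_abs, this]
  calc |∑ j, M i j * x j| ≤ ∑ j, |M i j * x j| := Finset.abs_sum_le_sum_abs _ _
    _ ≤ ∑ _j : Fin n, ‖M‖ * ‖x‖ := by
        refine Finset.sum_le_sum fun j _ => ?_
        rw [abs_mul]
        gcongr
        · exact (norm_le_pi_norm (M i) j).trans (norm_le_pi_norm M i)
        · exact norm_le_pi_norm x j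
    _ = n * ‖M‖ * ‖x‖ := by simp [mul_assoc]

lemma skew_dot (n : ℕ) (A : Matrix (Fin n) (Fin n) ℝ) (h : Aᵀ = -A) (v : Fin n → ℝ) :
    dotProduct v (A.mulVec v) = 0 := by
  have h1 := Matrix.dotProduct_mulVec v A v
  have h2 : A.vecMul v = -(A.mulVec v) := by
    rw [← Matrix.mulVec_transpose, h, Matrix.neg_mulVec]
  rw [h2, neg_dotProduct, dotProduct_comm] at h1
  rw [dotProduct_comm]
  linarith

lemma skew_ker_finrank (n : ℕ) (A : Matrix (Fin n) (Fin n) ℝ) (h : Aᵀ = -A) (h0 : A ≠ 0) :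
    Module.finrank ℝ (LinearMap.ker A.mulVecLin) ≤ n - 2 := by
  obtain ⟨x, hx⟩ : ∃ x, A.mulVec x ≠ 0 := by
    by_contra hz
    push_neg at hz
    apply h0
    ext i j
    have := congrFun (hz (Pi.single j 1)) i
    simpa [Matrix.mulVec_single] using this
  set u := A.mulVec x with hu
  set w := A.mulVec u with hw
  have hS : 0 < dotProduct u u := by
    have hnn : 0 ≤ dotProduct u u := Finset.sum_nonneg fun j _ => mul_self_nonneg _
    rcases lt_or_eq_of_le hnn with h' | h'
    · exact h'
    · exact absurd (dotProduct_self_eq_zero.mp h'.symm) hx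
  have hxw : dotProduct x w = -(dotProduct u u) := by
    have h1 : dotProduct x w = dotProduct (A.vecMul x) u :=
      Matrix.dotProduct_mulVec x A u
    have h2 : A.vecMul x = -u := by
      rw [← Matrix.mulVec_transpose, h, Matrix.neg_mulVec, hu]
    rw [h1, h2, neg_dotProduct]
  have hxu : dotProduct x u = 0 := skew_dot n A h x
  have hind : LinearIndependent ℝ ![u, w] := by
    rw [LinearIndependent.pair_iff]
    intro s t hst
    have hd : dotProduct x (s • u + t • w) = 0 := by rw [hst, dotProduct_zero]
    rw [dotProduct_add, dotProduct_smul, dotProduct_smul, hxu, hxw] at hd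
    have ht : t = 0 := by
      have : -(t * dotProduct u u) = 0 := by
        simpa [smul_eq_mul] using hd
      rcases mul_eq_zero.mp (neg_eq_zero.mp this) with h' | h'
      · exact h'
      · exact absurd h' (ne_of_gt hS)
    refine ⟨?_, ht⟩
    rw [ht, zero_smul, add_zero, smul_eq_zero] at hst
    exact hst.resolve_right hx
  have hspan : Submodule.span ℝ (Set.range ![u, w]) ≤ LinearMap.range A.mulVecLin := by
    rw [Submodule.span_le]
    rintro y ⟨i, rfl⟩
    fin_cases i
    · exact ⟨x, rfl⟩
    · exact ⟨u, rfl⟩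
  have h2le : 2 ≤ Module.finrank ℝ (LinearMap.range A.mulVecLin) := by
    have := finrank_span_eq_card hind
    simp only [Fintype.card_fin] at this
    calc (2:ℕ) = Module.finrank ℝ (Submodule.span ℝ (Set.range ![u, w])) := this.symm
      _ ≤ _ := Submodule.finrank_mono hspan
  have hrn := LinearMap.finrank_range_add_finrank_ker A.mulVecLin
  have : Module.finrank ℝ (Fin n → ℝ) = n := by simp
  omega

lemma skew_limit (n : ℕ) (f : ℕ → Fin n → Fin n → ℝ) (v : Fin n → Fin n → ℝ)
    (hf : ∀ k i j, f k j i = -(f k i j)) (h : Tendsto f atTop (nhds v)) :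
    ∀ i j, v j i = -(v i j) := by
  intro i j
  have hent : ∀ a b, Tendsto (fun k => f k a b) atTop (nhds (v a b)) := fun a b =>
    tendsto_pi_nhds.mp (tendsto_pi_nhds.mp h a) b
  have h2 : Tendsto (fun k => f k j i) atTop (nhds (-(v i j))) :=
    ((hent i j).neg).congr fun k => (hf k i j).symm
  exact tendsto_nhds_unique (hent j i) h2
open scoped Matrix

/-- Compactness alternative for sequences of infinitesimal rigid motions:
either a subsequence converges uniformly on compact sets to an affine map with
skew-symmetric linear part, or a subsequence diverges off an affine subspace of
dimension at most `n - 2`. -/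
theorem stmt0 (n : ℕ) (A : ℕ → Matrix (Fin n) (Fin n) ℝ) (b : ℕ → Fin n → ℝ)
    (hskew : ∀ k, (A k)ᵀ = -(A k)) :
    ∃ φ : ℕ → ℕ, StrictMono φ ∧
      ((∃ (A₀ : Matrix (Fin n) (Fin n) ℝ) (b₀ : Fin n → ℝ), A₀ᵀ = -A₀ ∧
          ∀ K : Set (Fin n → ℝ), IsCompact K →
            TendstoUniformlyOn (fun k x => (A (φ k)).mulVec x + b (φ k))
              (fun x => A₀.mulVec x + b₀) atTop K) ∨
        (∃ P : AffineSubspace ℝ (Fin n → ℝ),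
          Module.finrank ℝ P.direction ≤ n - 2 ∧
          ∀ x : Fin n → ℝ, x ∉ P →
            Tendsto (fun k => ‖(A (φ k)).mulVec x + b (φ k)‖) atTop atTop)) := by
  classical
  set c : ℕ → (Fin n → Fin n → ℝ) × (Fin n → ℝ) := fun k => (A k, b k) with hc
  have hentry : ∀ m i j, (c m).1 j i = -((c m).1 i j) := by
    intro m i j
    have := congrFun (congrFun (hskew m) i) j
    simpa [Matrix.transpose_apply, Matrix.neg_apply] using this
  by_cases hbd : ∃ C, ∃ᶠ k in atTop, ‖c k‖ ≤ C
  · -- bounded case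
    obtain ⟨C, hC⟩ := hbd
    obtain ⟨ψ, hψ, hψC⟩ := extraction_of_frequently_atTop hC
    obtain ⟨v, hv, φ', hφ', hlim⟩ :=
      (isCompact_closedBall (0 : (Fin n → Fin n → ℝ) × (Fin n → ℝ)) C).tendsto_subseq
        (x := fun k => c (ψ k))
        (fun k => by simpa [Metric.mem_closedBall, dist_zero_right] using hψC k)
    refine ⟨ψ ∘ φ', hψ.comp hφ', Or.inl ⟨Matrix.of v.1, v.2, ?_, ?_⟩⟩
    · have hsk := skew_limit n (fun k => (c (ψ (φ' k))).1) v.1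
        (fun k i j => hentry (ψ (φ' k)) i j)
        ((continuous_fst.tendsto v).comp hlim)
      ext i j
      simp only [Matrix.transpose_apply, Matrix.neg_apply, Matrix.of_apply]
      exact hsk i j
    · intro K hK
      obtain ⟨R, hR⟩ := hK.isBounded.subset_closedBall 0
      set R' : ℝ := max R 0 with hR'
      have hxR : ∀ x ∈ K, ‖x‖ ≤ R' := by
        intro x hx
        have := hR hx
        rw [Metric.mem_closedBall, dist_zero_right] at this
        exact this.trans (le_max_left _ _)
      rw [Metric.tendstoUniformlyOn_iff]
      intro ε hε
      have hzero : Tendsto (fun k => (n * R' + 1) * ‖v - c (ψ (φ' k))‖) atTop (nhds 0) := by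
        have h1 : Tendsto (fun k => v - c (ψ (φ' k))) atTop (nhds 0) := by
          simpa using (tendsto_const_nhds (x := v)).sub hlim
        simpa using (h1.norm.const_mul (n * R' + 1))
      filter_upwards [hzero.eventually_lt_const hε] with k hk x hx
      set m := ψ (φ' k) with hm
      have key : (Matrix.of v.1).mulVec x + v.2 - ((A m).mulVec x + b m)
          = (Matrix.of (v.1 - (c m).1)).mulVec x + (v.2 - (c m).2) := by
        have h2 : Matrix.of (v.1 - (c m).1) = Matrix.of v.1 - A m := rfl
        rw [h2, Matrix.sub_mulVec]
        abel
      have hmeq : (ψ ∘ φ') k = m := rfl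
      rw [dist_eq_norm, hmeq, key]
      have hb1 : ‖v.1 - (c m).1‖ ≤ ‖v - c m‖ := norm_fst_le (v - c m)
      have hb2 : ‖v.2 - (c m).2‖ ≤ ‖v - c m‖ := norm_snd_le (v - c m)
      calc ‖(Matrix.of (v.1 - (c m).1)).mulVec x + (v.2 - (c m).2)‖
          ≤ ‖(Matrix.of (v.1 - (c m).1)).mulVec x‖ + ‖v.2 - (c m).2‖ := norm_add_le _ _
        _ ≤ n * ‖v.1 - (c m).1‖ * ‖x‖ + ‖v.2 - (c m).2‖ := by
            have := norm_mulVec_le n (v.1 - (c m).1) x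
            linarith
        _ ≤ (n * R' + 1) * ‖v - c m‖ := by
            have hx' : ‖x‖ ≤ R' := hxR x hx
            have hnn : (0:ℝ) ≤ ‖v.1 - (c m).1‖ := norm_nonneg _
            have hnx : (0:ℝ) ≤ ‖x‖ := norm_nonneg _
            have hR0 : (0:ℝ) ≤ R' := le_max_right _ _
            have hmm : ‖v.1 - (c m).1‖ * ‖x‖ ≤ ‖v - c m‖ * R' :=
              mul_le_mul hb1 hx' hnx (norm_nonneg _)
            have hmm2 : (n:ℝ) * (‖v.1 - (c m).1‖ * ‖x‖) ≤ (n:ℝ) * (‖v - c m‖ * R') :=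
              mul_le_mul_of_nonneg_left hmm (Nat.cast_nonneg n)
            nlinarith [hmm2, hb2]
        _ < ε := hk
  · -- unbounded case
    push_neg at hbd
    have hinf : Tendsto (fun k => ‖c k‖) atTop atTop := by
      rw [tendsto_atTop]
      intro C
      have := hbd C
      filter_upwards [this] with k hk
      exact hk.le
    set d : ℕ → (Fin n → Fin n → ℝ) × (Fin n → ℝ) :=
      fun k => if ‖c k‖ = 0 then 0 else ‖c k‖⁻¹ • c k with hd
    have hdball : ∀ k, d k ∈ Metric.closedBall (0 : (Fin n → Fin n → ℝ) × (Fin n → ℝ)) 1 := by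
      intro k
      rw [Metric.mem_closedBall, dist_zero_right]
      by_cases h : ‖c k‖ = 0
      · simp [hd, h]
      · simp only [hd, if_neg h, norm_smul, norm_inv, norm_norm]
        rw [inv_mul_cancel₀ h]
    obtain ⟨w, hw, φ, hφ, hlim⟩ :=
      (isCompact_closedBall (0 : (Fin n → Fin n → ℝ) × (Fin n → ℝ)) 1).tendsto_subseq
        (x := d) hdball
    have htφ : Tendsto (fun k => ‖c (φ k)‖) atTop atTop := hinf.comp hφ.tendsto_atTop
    have hev : ∀ᶠ k in atTop, ‖c (φ k)‖ ≠ 0 := by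
      filter_upwards [htφ.eventually_gt_atTop 0] with k hk
      exact ne_of_gt hk
    have hwnorm : ‖w‖ = 1 := by
      have h1 : Tendsto (fun k => ‖d (φ k)‖) atTop (nhds ‖w‖) := hlim.norm
      have h2 : Tendsto (fun k => ‖d (φ k)‖) atTop (nhds 1) := by
        refine Tendsto.congr' ?_ tendsto_const_nhds
        filter_upwards [hev] with k hk
        simp only [hd, if_neg hk, norm_smul, norm_inv, norm_norm]
        rw [inv_mul_cancel₀ hk]
      exact tendsto_nhds_unique h1 h2
    -- skewness of limit
    have hdentry : ∀ k i j, (d k).1 j i = -((d k).1 i j) := by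
      intro k i j
      by_cases h : ‖c k‖ = 0
      · simp [hd, h]
      · simp only [hd, if_neg h, Prod.smul_fst, Pi.smul_apply, smul_eq_mul]
        have h1 : A k j i = -(A k i j) := hentry k i j
        rw [hentry k i j]
        ring
    have hsk := skew_limit n (fun k => (d (φ k)).1) w.1
      (fun k i j => hdentry (φ k) i j) ((continuous_fst.tendsto w).comp hlim)
    have hA₀skew : (Matrix.of w.1)ᵀ = -(Matrix.of w.1) := by
      ext i j
      simp only [Matrix.transpose_apply, Matrix.neg_apply, Matrix.of_apply]
      exact hsk i j
    -- pointwise limit of normalized maps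
    have hcont : ∀ x : Fin n → ℝ,
        Tendsto (fun k => (Matrix.of (d (φ k)).1).mulVec x + (d (φ k)).2) atTop
          (nhds ((Matrix.of w.1).mulVec x + w.2)) := by
      intro x
      have hco : Continuous fun p : (Fin n → Fin n → ℝ) × (Fin n → ℝ) =>
          (Matrix.of p.1).mulVec x + p.2 := by
        refine Continuous.add ?_ continuous_snd
        refine continuous_pi fun i => ?_
        have : (fun p : (Fin n → Fin n → ℝ) × (Fin n → ℝ) => (Matrix.of p.1).mulVec x i)
            = fun p => ∑ j, p.1 i j * x j := rfl
        rw [this]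
        exact continuous_finset_sum _ fun j _ => by fun_prop
      exact (hco.tendsto w).comp hlim
    -- divergence for x with limit nonzero
    have hdiv : ∀ x : Fin n → ℝ, (Matrix.of w.1).mulVec x + w.2 ≠ 0 →
        Tendsto (fun k => ‖(A (φ k)).mulVec x + b (φ k)‖) atTop atTop := by
      intro x hx
      have hpos : 0 < ‖(Matrix.of w.1).mulVec x + w.2‖ := norm_pos_iff.mpr hx
      have hmul : Tendsto
          (fun k => ‖c (φ k)‖ * ‖(Matrix.of (d (φ k)).1).mulVec x + (d (φ k)).2‖)
          atTop atTop :=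
        htφ.atTop_mul_pos hpos ((hcont x).norm)
      refine Tendsto.congr' ?_ hmul
      filter_upwards [hev] with k hk
      have h1 : (A (φ k)).mulVec x + b (φ k)
          = ‖c (φ k)‖ • ((Matrix.of (d (φ k)).1).mulVec x + (d (φ k)).2) := by
        have h2 : (Matrix.of ((‖c (φ k)‖⁻¹ • c (φ k)).1)) = ‖c (φ k)‖⁻¹ • A (φ k) := rfl
        have hsnd : (‖c (φ k)‖⁻¹ • c (φ k)).2 = ‖c (φ k)‖⁻¹ • b (φ k) := rfl
        simp only [hd, if_neg hk, h2, hsnd, Matrix.smul_mulVec, smul_add, smul_smul,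
          mul_inv_cancel₀ hk, one_smul]
      rw [h1, norm_smul, Real.norm_eq_abs, abs_of_pos (lt_of_le_of_ne (norm_nonneg _) (Ne.symm hk))]
    refine ⟨φ, hφ, Or.inr ?_⟩
    by_cases hroot : ∃ x₀, (Matrix.of w.1).mulVec x₀ + w.2 = 0
    · obtain ⟨x₀, hx₀⟩ := hroot
      have hA0 : Matrix.of w.1 ≠ 0 := by
        intro h0
        have hb0 : w.2 = 0 := by
          have := hx₀
          rw [h0, Matrix.zero_mulVec, zero_add] at this
          exact this
        have hw1 : w.1 = 0 := by
          have := congrArg Matrix.of.symm h0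
          simpa using this
        rw [show w = (w.1, w.2) from rfl, hw1, hb0] at hwnorm
        simp at hwnorm
      refine ⟨AffineSubspace.mk' x₀ (LinearMap.ker (Matrix.of w.1).mulVecLin), ?_, ?_⟩
      · rw [AffineSubspace.direction_mk']
        exact skew_ker_finrank n (Matrix.of w.1) hA₀skew hA0
      · intro x hxP
        refine hdiv x ?_
        intro hzero
        apply hxP
        rw [AffineSubspace.mem_mk']
        rw [LinearMap.mem_ker]
        have : (Matrix.of w.1).mulVecLin (x -ᵥ x₀) = ((Matrix.of w.1).mulVec x + w.2)
            - ((Matrix.of w.1).mulVec x₀ + w.2) := by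
          simp only [Matrix.mulVecLin_apply]
          rw [show (x -ᵥ x₀) = x - x₀ from rfl, Matrix.mulVec_sub]
          abel
        rw [this, hzero, hx₀, sub_zero]
    · push_neg at hroot
      refine ⟨⊥, ?_, ?_⟩
      · rw [AffineSubspace.direction_bot]
        simp
      · intro x _
        exact hdiv x (hroot x)
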